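/- For the generalized Sierpiński graphs of the claw K_{1,3}: χρ(S^1_{K_{1,3}}) = 2 and χρ(S^n_{K_{1,3}}) = 3 for every n ≥ 2. -/

import Mathlib

/-- The generalized Sierpiński graph `S^n_G` of a base graph `G` on the vertex set
`[k]_0 = {0, …, k−1}`: the vertices are the words of length `n` over `[k]_0`, and two
distinct words `u, v` are adjacent iff there is an index `i` with `u j = v j` for `j < i`,
`u i` adjacent to `v i` in `G`, and `u j = v i`, `v j = u i` for all `j > i`. -/
def genSierpinski {k : ℕ} (G : SimpleGraph (Fin k)) (n : ℕ) :
    SimpleGraph (Fin n → Fin k) where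
  Adj u v := ∃ i : Fin n,
    (∀ j, j < i → u j = v j) ∧ G.Adj (u i) (v i) ∧ ∀ j, i < j → u j = v i ∧ v j = u i
  symm := by
    refine ⟨?_⟩
    rintro u v ⟨i, h1, h2, h3⟩
    exact ⟨i, fun j hj => (h1 j hj).symm, h2.symm, fun j hj => ⟨(h3 j hj).2, (h3 j hj).1⟩⟩
  loopless := by
    refine ⟨?_⟩
    rintro u ⟨i, -, h2, -⟩
    exact G.irrefl h2

/-- The Sierpiński graph `S^n_k`, i.e. the generalized Sierpiński graph of the complete
graph `K_k` on `[k]_0` (in which two vertices are adjacent iff they are distinct). -/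
def sierpinski (k n : ℕ) : SimpleGraph (Fin n → Fin k) :=
  genSierpinski (⊤ : SimpleGraph (Fin k)) n

/-- `c` is a `t`-packing coloring of `G`: every vertex gets a color in `{1, …, t}`, and any
two distinct vertices with the same color `i` are at distance greater than `i`
(equivalently, every walk between them has length greater than `i`). -/
def IsPackingColoring {V : Type*} (G : SimpleGraph V) (t : ℕ) (c : V → ℕ) : Prop :=
  (∀ v, 1 ≤ c v ∧ c v ≤ t) ∧
    ∀ u v, u ≠ v → c u = c v → ∀ p : G.Walk u v, c u < p.length

/-- The packing chromatic number `χρ(G)`: the least `t` such that `G` admits a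
`t`-packing coloring. -/
noncomputable def packingChromatic {V : Type*} (G : SimpleGraph V) : ℕ :=
  sInf {t | ∃ c : V → ℕ, IsPackingColoring G t c}

/-- The star `K_{1,3}` on `{0, 1, 2, 3}` with center `1` and edges `{1,0}, {1,2}, {1,3}`. -/
def clawK13 : SimpleGraph (Fin 4) :=
  SimpleGraph.fromRel (fun u v => (u, v) ∈
    [((1 : Fin 4), (0 : Fin 4)), (1, 2), (1, 3)])

lemma claw_one : ∀ a b : Fin 4, clawK13.Adj a b →
    (a = 1 ∧ b ≠ 1) ∨ (a ≠ 1 ∧ b = 1) := by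
  simp only [clawK13, SimpleGraph.fromRel_adj, List.mem_cons, List.not_mem_nil]
  decide

lemma edge_flip {n : ℕ} (L : Fin n) (hL : (L : ℕ) = n - 1)
    {x y : Fin n → Fin 4} (h : (genSierpinski clawK13 n).Adj x y) :
    decide (x L = 1) = !decide (y L = 1) := by
  obtain ⟨i, h1, h2, h3⟩ := h
  have hiL : i ≤ L := by
    rw [Fin.le_def, hL]; have := i.isLt; omega
  rcases lt_or_eq_of_le hiL with hlt | heq
  · obtain ⟨e1, e2⟩ := h3 L hlt
    rcases claw_one _ _ h2 with ⟨p, q⟩ | ⟨p, q⟩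
    · rw [e1, e2, p]; simp [q]
    · rw [e1, e2, q]; simp [p]
  · subst heq
    rcases claw_one _ _ h2 with ⟨p, q⟩ | ⟨p, q⟩
    · rw [p]; simp [q]
    · rw [q]; simp [p]

lemma no_common {n : ℕ} (hn : 2 ≤ n) (L P : Fin n) (hL : (L:ℕ) = n - 1) (hP : (P:ℕ) = n - 2)
    {x u v : Fin n → Fin 4}
    (hu : (genSierpinski clawK13 n).Adj x u) (hv : (genSierpinski clawK13 n).Adj x v)
    (huL : u L = 1) (hvL : v L = 1) (hne : u ≠ v) :
    (u P = 1) ↔ ¬ (v P = 1) := by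
  obtain ⟨i, h1, h2, h3⟩ := hu
  obtain ⟨i', k1, k2, k3⟩ := hv
  have hiL : i ≤ L := by rw [Fin.le_def, hL]; have := i.isLt; omega
  have hi'L : i' ≤ L := by rw [Fin.le_def, hL]; have := i'.isLt; omega
  have hPL : P < L := by rw [Fin.lt_def, hL, hP]; omega
  rcases lt_or_eq_of_le hiL with hi | hi
  · -- i < L : x i = 1, u i ≠ 1
    have e2 : u L = x i := (h3 L hi).2
    have hxi : x i = 1 := by rw [← e2, huL]
    have hui : u i ≠ 1 := by
      rcases claw_one _ _ h2 with ⟨p, q⟩ | ⟨p, q⟩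
      · exact q
      · exact absurd hxi p
    have hiP : i ≤ P := by rw [Fin.le_def, hP]; rw [Fin.lt_def, hL] at hi; omega
    rcases lt_or_eq_of_le hi'L with hi' | hi'
    · -- both < L
      have e2' : v L = x i' := (k3 L hi').2
      have hxi' : x i' = 1 := by rw [← e2', hvL]
      have hvi' : v i' ≠ 1 := by
        rcases claw_one _ _ k2 with ⟨p, q⟩ | ⟨p, q⟩
        · exact q
        · exact absurd hxi' p
      rcases lt_trichotomy i i' with hii | hii | hii
      · exact absurd (((h3 i' hii).1).symm.trans hxi') hui
      · exfalso; apply hne; funext j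
        rcases lt_trichotomy j i with hj | hj | hj
        · rw [← h1 j hj, ← k1 j (hii ▸ hj)]
        · rw [hj, ← (h3 L hi).1, hii, ← (k3 L hi').1]
        · rw [(h3 j hj).2, (k3 j (hii ▸ hj)).2, hxi, ← hii, hxi]
      · exact absurd (((k3 i hii).1).symm.trans hxi) hvi'
    · -- i' = L, i < L
      have hPi' : P < i' := hi' ▸ hPL
      have hvP : v P = x P := (k1 P hPi').symm
      rcases lt_or_eq_of_le hiP with hiP' | hiP'
      · -- i < P : u P = x i = 1, x P = u i ≠ 1
        have hu1 : u P = 1 := by rw [(h3 P hiP').2, hxi]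
        have hv1 : v P ≠ 1 := by rw [hvP, (h3 P hiP').1]; exact hui
        simp [hu1, hv1]
      · -- i = P : u P = u i ≠ 1, v P = x P = x i = 1
        have hu1 : u P ≠ 1 := by rw [← hiP']; exact hui
        have hv1 : v P = 1 := by rw [hvP, ← hiP', hxi]
        simp [hu1, hv1]
  · -- i = L
    have huP : u P = x P := (h1 P (hi ▸ hPL)).symm
    rcases lt_or_eq_of_le hi'L with hi' | hi'
    · -- i' < L
      have e2' : v L = x i' := (k3 L hi').2
      have hxi' : x i' = 1 := by rw [← e2', hvL]
      have hvi' : v i' ≠ 1 := by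
        rcases claw_one _ _ k2 with ⟨p, q⟩ | ⟨p, q⟩
        · exact q
        · exact absurd hxi' p
      have hi'P : i' ≤ P := by rw [Fin.le_def, hP]; rw [Fin.lt_def, hL] at hi'; omega
      rcases lt_or_eq_of_le hi'P with hi'P' | hi'P'
      · have hv1 : v P = 1 := by rw [(k3 P hi'P').2, hxi']
        have hu1 : u P ≠ 1 := by rw [huP, (k3 P hi'P').1]; exact hvi'
        simp [hu1, hv1]
      · have hu1 : u P = 1 := by rw [huP, ← hi'P', hxi']
        have hv1 : v P ≠ 1 := by rw [← hi'P']; exact hvi'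
        simp [hu1, hv1]
    · -- i' = L = i : u = v
      exfalso; apply hne; funext j
      have hjL : j ≤ L := by rw [Fin.le_def, hL]; have := j.isLt; omega
      rcases lt_or_eq_of_le hjL with hj | hj
      · rw [← h1 j (hi ▸ hj), ← k1 j (hi' ▸ hj)]
      · rw [hj, huL, hvL]

lemma walk_parity {V : Type*} {G : SimpleGraph V} (s : V → Bool)
    (hs : ∀ x y, G.Adj x y → s x = !s y) {u v : V} (p : G.Walk u v) :
    (s u = s v) ↔ Even p.length := by
  induction p with
  | nil => simp
  | @cons a b c h q ih =>
    rw [SimpleGraph.Walk.length_cons, Nat.even_add_one, ← ih, hs _ _ h]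
    cases s b <;> cases s c <;> simp

lemma walk_two {V : Type*} {G : SimpleGraph V} {u v : V} (p : G.Walk u v) (h : p.length = 2) :
    ∃ x, G.Adj u x ∧ G.Adj x v := by
  cases p with
  | nil => simp at h
  | cons h1 q =>
    cases q with
    | nil => simp at h
    | cons h2 q2 =>
      have h0 : q2.length = 0 := by
        simp only [SimpleGraph.Walk.length_cons] at h; omega
      exact ⟨_, h1, (SimpleGraph.Walk.eq_of_length_eq_zero h0) ▸ h2⟩

lemma claw01 : clawK13.Adj 0 1 := by
  simp only [clawK13, SimpleGraph.fromRel_adj, List.mem_cons, List.not_mem_nil]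
  decide

lemma claw12 : clawK13.Adj 1 2 := by
  simp only [clawK13, SimpleGraph.fromRel_adj, List.mem_cons, List.not_mem_nil]
  decide

lemma upn (n : ℕ) (hn : 2 ≤ n) :
    IsPackingColoring (genSierpinski clawK13 n) 3
      (fun u => if u ⟨n-1, by omega⟩ = 1 then (if u ⟨n-2, by omega⟩ = 1 then 2 else 3) else 1) := by
  set L : Fin n := ⟨n-1, by omega⟩ with hLdef
  set P : Fin n := ⟨n-2, by omega⟩ with hPdef
  constructor
  · intro v; dsimp only; split_ifs <;> omega
  · intro u v huv hcc p
    dsimp only at hcc ⊢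
    have hpar := walk_parity (fun w => decide (w L = 1))
      (fun x y h => edge_flip L rfl h) p
    have hne0 : p.length ≠ 0 := fun h0 => huv (SimpleGraph.Walk.eq_of_length_eq_zero h0)
    by_cases huL : u L = 1
    · have hvL : v L = 1 := by
        by_contra hvL
        rw [if_pos huL, if_neg hvL] at hcc
        split_ifs at hcc <;> omega
      have heven : Even p.length := hpar.mp (by simp [huL, hvL])
      have hne2 : p.length ≠ 2 := by
        intro h2
        obtain ⟨x, h1x, h2x⟩ := walk_two p h2
        have hiff := no_common hn L P rfl rfl h1x.symm h2x huL hvL huv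
        rw [if_pos huL, if_pos hvL] at hcc
        split_ifs at hcc with ha hb hb
        · exact (hiff.mp ha) hb
        · omega
        · omega
        · exact ha (hiff.mpr hb)
      obtain ⟨k, hk⟩ := heven
      rw [if_pos huL]
      split_ifs <;> omega
    · have hvL : v L ≠ 1 := by
        intro hvL
        rw [if_neg huL, if_pos hvL] at hcc
        split_ifs at hcc <;> omega
      have heven : Even p.length := hpar.mp (by simp [huL, hvL])
      obtain ⟨k, hk⟩ := heven
      rw [if_neg huL]
      omega

lemma up1 :
    IsPackingColoring (genSierpinski clawK13 1) 2
      (fun u => if u ⟨0, by omega⟩ = 1 then 2 else 1) := by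
  constructor
  · intro v; dsimp only; split_ifs <;> omega
  · intro u v huv hcc p
    dsimp only at hcc ⊢
    have hpar := walk_parity (fun w => decide (w ⟨0, by omega⟩ = 1))
      (fun x y h => edge_flip ⟨0, by omega⟩ rfl h) p
    have hne0 : p.length ≠ 0 := fun h0 => huv (SimpleGraph.Walk.eq_of_length_eq_zero h0)
    by_cases huL : u ⟨0, by omega⟩ = 1
    · exfalso
      have hvL : v ⟨0, by omega⟩ = 1 := by
        by_contra hvL
        rw [if_pos huL, if_neg hvL] at hcc; omega
      apply huv; funext j
      have : j = ⟨0, by omega⟩ := Subsingleton.elim _ _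
      rw [this, huL, hvL]
    · have hvL : v ⟨0, by omega⟩ ≠ 1 := by
        intro hvL
        rw [if_neg huL, if_pos hvL] at hcc; omega
      have heven : Even p.length := hpar.mp
        (by rw [decide_eq_decide]; exact iff_of_false huL hvL)
      obtain ⟨k, hk⟩ := heven
      rw [if_neg huL]
      omega

lemma low1 (t : ℕ) (c : (Fin 1 → Fin 4) → ℕ)
    (h : IsPackingColoring (genSierpinski clawK13 1) t c) : 2 ≤ t := by
  obtain ⟨hb, hp⟩ := h
  by_contra hlt
  push_neg at hlt
  have h1 := hb (fun _ => 1)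
  have h0 := hb (fun _ => 0)
  have hne : (fun _ : Fin 1 => (1 : Fin 4)) ≠ (fun _ : Fin 1 => (0 : Fin 4)) := by
    intro h
    have := congrFun h ⟨0, by omega⟩
    exact absurd this (by decide)
  have hadj : (genSierpinski clawK13 1).Adj (fun _ => 1) (fun _ => 0) := by
    refine ⟨⟨0, by omega⟩, ?_, claw01.symm, ?_⟩
    · intro j hj; exact absurd hj (by simp [Fin.lt_def])
    · intro j hj; exact absurd hj (by rw [Fin.lt_def]; have := j.isLt; omega)
  have hcc : c (fun _ => 1) = c (fun _ => 0) := by omega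
  have := hp _ _ hne hcc (SimpleGraph.Walk.cons hadj SimpleGraph.Walk.nil)
  simp [SimpleGraph.Walk.length_cons] at this
  omega

lemma lown (n : ℕ) (hn : 2 ≤ n) (t : ℕ) (c : (Fin n → Fin 4) → ℕ)
    (h : IsPackingColoring (genSierpinski clawK13 n) t c) : 3 ≤ t := by
  obtain ⟨hb, hp⟩ := h
  by_contra hlt
  push_neg at hlt
  set G := genSierpinski clawK13 n with hG
  set va : Fin n → Fin 4 := fun j => if (j:ℕ) = 0 then 0 else 1 with hva
  set vb : Fin n → Fin 4 := fun j => if (j:ℕ) = 0 then 1 else 0 with hvb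
  set vc : Fin n → Fin 4 := fun j => if (j:ℕ) = 0 then 1 else if (j:ℕ) = n-1 then 1 else 0 with hvc
  set vd : Fin n → Fin 4 := fun j => if (j:ℕ) = 0 then 1 else if (j:ℕ) = n-1 then 2 else 0 with hvd
  have hL0 : (n - 1 : ℕ) ≠ 0 := by omega
  set L : Fin n := ⟨n-1, by omega⟩ with hLdef
  have hLv : (L : ℕ) = n - 1 := rfl
  -- evaluations
  have va0 : va ⟨0, by omega⟩ = 0 := by simp [hva]
  have vb0 : vb ⟨0, by omega⟩ = 1 := by simp [hvb]
  have vbL : vb L = 0 := by simp [hvb, hLv, hL0]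
  have vcL : vc L = 1 := by simp [hvc, hLv, hL0]
  have vdL : vd L = 2 := by simp [hvd, hLv, hL0]
  have hab : G.Adj va vb := by
    refine ⟨⟨0, by omega⟩, ?_, ?_, ?_⟩
    · intro j hj; exact absurd hj (by simp [Fin.lt_def])
    · rw [va0, vb0]; exact claw01
    · intro j hj
      have hj0 : (j:ℕ) ≠ 0 := by rw [Fin.lt_def] at hj; omega
      rw [va0, vb0]
      constructor <;> simp [hva, hvb, hj0]
  have hbc : G.Adj vb vc := by
    refine ⟨L, ?_, ?_, ?_⟩
    · intro j hj
      rw [Fin.lt_def, hLv] at hj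
      have hj1 : (j:ℕ) ≠ n - 1 := by omega
      by_cases h0 : (j:ℕ) = 0 <;> simp [hvb, hvc, h0, hj1]
    · rw [vbL, vcL]; exact claw01
    · intro j hj
      rw [Fin.lt_def, hLv] at hj
      exact absurd hj (by have := j.isLt; omega)
  have hcd : G.Adj vc vd := by
    refine ⟨L, ?_, ?_, ?_⟩
    · intro j hj
      rw [Fin.lt_def, hLv] at hj
      have hj1 : (j:ℕ) ≠ n - 1 := by omega
      by_cases h0 : (j:ℕ) = 0 <;> simp [hvc, hvd, h0, hj1]
    · rw [vcL, vdL]; exact claw12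
    · intro j hj
      rw [Fin.lt_def, hLv] at hj
      exact absurd hj (by have := j.isLt; omega)
  -- distinctness
  have hab' : va ≠ vb := fun h => by
    rw [h] at va0; rw [va0] at vb0; exact absurd vb0 (by decide)
  have hbc' : vb ≠ vc := fun h => by
    rw [h] at vbL; rw [vbL] at vcL; exact absurd vcL (by decide)
  have hcd' : vc ≠ vd := fun h => by
    rw [h] at vcL; rw [vcL] at vdL; exact absurd vdL (by decide)
  have hac' : va ≠ vc := fun h => by
    rw [h] at va0
    have : vc ⟨0, by omega⟩ = 1 := by simp [hvc]
    rw [va0] at this; exact absurd this (by decide)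
  have hbd' : vb ≠ vd := fun h => by
    rw [h] at vbL; rw [vbL] at vdL; exact absurd vdL (by decide)
  -- adjacent vertices get different colors
  have hdiff : ∀ u v : Fin n → Fin 4, u ≠ v → G.Adj u v → c u ≠ c v := by
    intro u v huv hadj hcc
    have h2 := hp u v huv hcc (SimpleGraph.Walk.cons hadj SimpleGraph.Walk.nil)
    simp [SimpleGraph.Walk.length_cons] at h2
    have := (hb u).1
    omega
  have h2step : ∀ u v w : Fin n → Fin 4, u ≠ w → c u = c w →
      G.Adj u v → G.Adj v w → c u < 2 := by
    intro u v w huw hcc h1 h2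
    have := hp u w huw hcc
      (SimpleGraph.Walk.cons h1 (SimpleGraph.Walk.cons h2 SimpleGraph.Walk.nil))
    simpa [SimpleGraph.Walk.length_cons] using this
  have ba := (hb va); have bb := (hb vb); have bc := (hb vc); have bd := (hb vd)
  have d1 := hdiff _ _ hab' hab
  have d2 := hdiff _ _ hbc' hbc
  have d3 := hdiff _ _ hcd' hcd
  have hcac : c va = c vc := by omega
  have hcbd : c vb = c vd := by omega
  rcases (by omega : c va = 1 ∨ c va = 2) with h | h
  · have : c vb = 2 := by omega
    have := h2step vb vc vd hbd' hcbd hbc hcd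
    omega
  · have := h2step va vb vc hac' hcac hab hbc
    omega

theorem tst : True := trivial

/-- `χρ(S^1_{K_{1,3}}) = 2` and `χρ(S^n_{K_{1,3}}) = 3` for all `n ≥ 2`. -/
theorem packingChromatic_genSierpinski_claw :
    packingChromatic (genSierpinski clawK13 1) = 2 ∧
    ∀ n : ℕ, 2 ≤ n → packingChromatic (genSierpinski clawK13 n) = 3 := by
  constructor
  · unfold packingChromatic
    apply le_antisymm
    · exact Nat.sInf_le ⟨_, up1⟩
    · exact le_csInf ⟨2, _, up1⟩ (by rintro t ⟨c, hc⟩; exact low1 t c hc)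
  · intro n hn
    unfold packingChromatic
    apply le_antisymm
    · exact Nat.sInf_le ⟨_, upn n hn⟩
    · exact le_csInf ⟨3, _, upn n hn⟩ (by rintro t ⟨c, hc⟩; exact lown n hn t c hc)
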